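/- Let a, b, n be positive integers with b ≥ a and n ≥ 3b(b+1)/a + 3b + 7. Then the spectral radius of K_{4b} ∇ (K₂ ∪ K_{n−4b−2}) is strictly less than n − 2. -/

import Mathlib

open scoped Classical

/-- The adjacency matrix of a simple graph is Hermitian over `ℝ`. -/
theorem adjMatrix_isHermitian {n : ℕ} (G : SimpleGraph (Fin n)) :
    (G.adjMatrix ℝ).IsHermitian := by
  unfold Matrix.IsHermitian
  rw [Matrix.conjTranspose_eq_transpose_of_trivial]
  exact G.isSymm_adjMatrix

/-- The spectral radius of a graph: the largest eigenvalue of its adjacency matrix. -/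
noncomputable def specRad {n : ℕ} (G : SimpleGraph (Fin n)) : ℝ :=
  ⨆ i, (adjMatrix_isHermitian G).eigenvalues i
/-- The graph `K_c ∇ (K₂ ∪ K_{n-c-2})` on `Fin n`: the first `c` vertices form a
dominating clique, the next two vertices form a `K₂`, and the remaining vertices
form a clique `K_{n-c-2}`. -/
def joinGraph (n c : ℕ) : SimpleGraph (Fin n) where
  Adj u v := u ≠ v ∧ ((u : ℕ) < c ∨ (v : ℕ) < c ∨ (((u : ℕ) < c + 2) ↔ ((v : ℕ) < c + 2)))
  symm := by
    constructor
    rintro u v ⟨h1, h2⟩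
    exact ⟨h1.symm, by tauto⟩
  loopless := ⟨fun u h => h.1 rfl⟩

/-- The graph `H_{n,b} = K_{b-1} ∇ (K₁ ∪ K_{n-b})` on `Fin n`: the complete graph on the
vertices `1, …, n-1` together with the vertex `0` joined precisely to `1, …, b-1`. -/
def Hgraph (n b : ℕ) : SimpleGraph (Fin n) where
  Adj u v := u ≠ v ∧ ¬((u : ℕ) = 0 ∧ b ≤ (v : ℕ)) ∧ ¬((v : ℕ) = 0 ∧ b ≤ (u : ℕ))
  symm := by
    constructor
    rintro u v ⟨h1, h2, h3⟩
    exact ⟨h1.symm, h3, h2⟩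
  loopless := ⟨fun u h => h.1 rfl⟩

open scoped Matrix
open Finset

/- ## Auxiliary lemmas -/

lemma dot_self_pos' {n : ℕ} {v : Fin n → ℝ} (hv0 : v ≠ 0) : 0 < v ⬝ᵥ v := by
  obtain ⟨j, hj⟩ := Function.ne_iff.1 hv0
  have hj' : v j ≠ 0 := hj
  have h1 : v j * v j ≤ v ⬝ᵥ v := by
    apply Finset.single_le_sum (f := fun k => v k * v k) (fun k _ => mul_self_nonneg _)
    exact Finset.mem_univ j
  have := mul_self_pos.2 hj'
  linarith

lemma rayleigh_lt {n : ℕ} (hn : 0 < n) (G : SimpleGraph (Fin n)) (r : ℝ)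
    (h : ∀ x : Fin n → ℝ, x ≠ 0 → x ⬝ᵥ ((G.adjMatrix ℝ) *ᵥ x) < r * (x ⬝ᵥ x)) :
    specRad G < r := by
  have : Nonempty (Fin n) := ⟨⟨0, hn⟩⟩
  unfold specRad
  obtain ⟨i, hi⟩ := exists_eq_ciSup_of_finite
    (f := fun i => (adjMatrix_isHermitian G).eigenvalues i)
  rw [← hi]
  set hA := adjMatrix_isHermitian G with hAdef
  set v : Fin n → ℝ := ⇑(hA.eigenvectorBasis i) with hvdef
  have hv0 : v ≠ 0 := by
    intro hc
    exact hA.eigenvectorBasis.orthonormal.ne_zero i (by simpa [hvdef] using hc)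
  have key := h v hv0
  rw [hA.mulVec_eigenvectorBasis i] at key
  rw [dotProduct_smul] at key
  have hvv : 0 < v ⬝ᵥ v := dot_self_pos' hv0
  have key2 : hA.eigenvalues i * (v ⬝ᵥ v) < r * (v ⬝ᵥ v) := key
  exact lt_of_mul_lt_mul_right key2 hvv.le

lemma Rpos (B M : ℝ) (hB : 1 ≤ B) (hM : 2*B+8 ≤ M) :
    0 < 2*(M+1)*(4*B+M-1)*(4*B+1) - 16*B*(4*B+1) - 8*B*M*(4*B+M-1) := by
  nlinarith [sq_nonneg (M - 2*B - 8), sq_nonneg B,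
    mul_pos (by linarith : (0:ℝ) < B) (by linarith : (0:ℝ) < M)]

lemma keypoly (B M SC SP SR : ℝ) (hB : 1 ≤ B) (hM : 2*B+8 ≤ M) (hSC : SC ≠ 0) :
    (SC^2+SP^2+SR^2+2*SC*SP+2*SC*SR)*(8*B*M)
      < 2*M*(4*B+M+1)*SC^2 + 4*B*M*(4*B+M+1)*SP^2 + 8*B*(4*B+M+1)*SR^2 := by
  have hR := Rpos B M hB hM
  have hB0 : (0:ℝ) < B := by linarith
  have hM0 : (0:ℝ) < M := by linarith
  have hSC2 : 0 < SC^2 := by positivity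
  have h1 : 0 ≤ 4*B*M*(4*B+1) * ((4*B+M-1)*SP - 2*SC)^2 :=
    mul_nonneg (mul_nonneg (mul_nonneg (by linarith) hM0.le) (by linarith)) (sq_nonneg _)
  have h2 : 0 ≤ 8*B*(4*B+M-1) * ((4*B+1)*SR - M*SC)^2 :=
    mul_nonneg (mul_nonneg (by linarith) (by linarith)) (sq_nonneg _)
  have h3 : 0 < (2*(M+1)*(4*B+M-1)*(4*B+1) - 16*B*(4*B+1) - 8*B*M*(4*B+M-1)) * (M * SC^2) :=
    mul_pos hR (by positivity)
  nlinarith [h1, h2, h3, mul_pos (mul_pos (by linarith : (0:ℝ) < 4*B+M-1)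
    (by linarith : (0:ℝ) < 4*B+1)) hM0]

lemma joinGraph_adj {n c : ℕ} (u v : Fin n) : (joinGraph n c).Adj u v ↔
    (u ≠ v ∧ ((u : ℕ) < c ∨ (v : ℕ) < c ∨ (((u : ℕ) < c + 2) ↔ ((v : ℕ) < c + 2)))) := Iff.rfl

/-- indicator of the clique part -/
def iC (n c : ℕ) (u : Fin n) : ℝ := if (u:ℕ) < c then 1 else 0
/-- indicator of the K₂ part -/
def iP (n c : ℕ) (u : Fin n) : ℝ := if c ≤ (u:ℕ) ∧ (u:ℕ) < c+2 then 1 else 0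
/-- indicator of the big clique part -/
def iR (n c : ℕ) (u : Fin n) : ℝ := if c+2 ≤ (u:ℕ) then 1 else 0

lemma entry_eq (n c : ℕ) (x : Fin n → ℝ) (u v : Fin n) :
    (joinGraph n c).adjMatrix ℝ u v * (x u * x v) =
      x u * x v - (if u = v then x u * x v else 0) -
      (iP n c u * x u * (iR n c v * x v) + iR n c u * x u * (iP n c v * x v)) := by
  unfold iP iR
  rcases u with ⟨i, hi⟩; rcases v with ⟨j, hj⟩
  simp only [SimpleGraph.adjMatrix_apply, joinGraph_adj, ne_eq, Fin.mk.injEq]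
  split_ifs
  any_goals ring
  all_goals (exfalso; omega)

lemma master (n c : ℕ) (x : Fin n → ℝ) :
    x ⬝ᵥ ((joinGraph n c).adjMatrix ℝ *ᵥ x)
      = (∑ u, x u)^2 - (∑ u, (x u)^2)
        - 2 * ((∑ u, iP n c u * x u) * (∑ u, iR n c u * x u)) := by
  have expand : x ⬝ᵥ ((joinGraph n c).adjMatrix ℝ *ᵥ x)
      = ∑ u, ∑ v, (joinGraph n c).adjMatrix ℝ u v * (x u * x v) := by
    simp only [dotProduct, Matrix.mulVec, dotProduct]
    apply Finset.sum_congr rfl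
    intro u _
    rw [Finset.mul_sum]
    apply Finset.sum_congr rfl
    intro v _
    ring
  rw [expand]
  rw [Finset.sum_congr rfl (fun u _ => Finset.sum_congr rfl (fun v _ => entry_eq n c x u v))]
  simp only [Finset.sum_sub_distrib, Finset.sum_add_distrib]
  rw [← Finset.sum_mul_sum, ← Finset.sum_mul_sum, ← Finset.sum_mul_sum]
  have hdiag : ∀ u : Fin n, (∑ v, if u = v then x u * x v else 0) = (x u)^2 := by
    intro u
    rw [Finset.sum_ite_eq]
    simp [sq]
  rw [Finset.sum_congr rfl (fun u _ => hdiag u)]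
  ring

lemma sumC_le (n c : ℕ) : ∑ u : Fin n, iC n c u ≤ (c : ℝ) := by
  unfold iC
  rw [Fin.sum_univ_eq_sum_range (fun i => if i < c then (1:ℝ) else 0)]
  rw [Finset.sum_boole]
  have hsub : (Finset.range n).filter (fun i => i < c) ⊆ Finset.range c := by
    intro i hi
    simp only [Finset.mem_filter, Finset.mem_range] at *
    exact hi.2
  have := Finset.card_le_card hsub
  rw [Finset.card_range] at this
  exact_mod_cast this

lemma sumP_le (n c : ℕ) : ∑ u : Fin n, iP n c u ≤ 2 := by
  unfold iP
  rw [Fin.sum_univ_eq_sum_range (fun i => if c ≤ i ∧ i < c+2 then (1:ℝ) else 0)]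
  rw [Finset.sum_boole]
  have hsub : (Finset.range n).filter (fun i => c ≤ i ∧ i < c+2) ⊆ Finset.Ico c (c+2) := by
    intro i hi
    simp only [Finset.mem_filter, Finset.mem_range, Finset.mem_Ico] at *
    omega
  have := Finset.card_le_card hsub
  rw [Nat.card_Ico] at this
  have h2 : ((Finset.range n).filter (fun i => c ≤ i ∧ i < c+2)).card ≤ 2 := by omega
  exact_mod_cast h2

lemma sumR_le (n c : ℕ) : ∑ u : Fin n, iR n c u ≤ ((n - (c+2) : ℕ) : ℝ) := by
  unfold iR
  rw [Fin.sum_univ_eq_sum_range (fun i => if c+2 ≤ i then (1:ℝ) else 0)]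
  rw [Finset.sum_boole]
  have hsub : (Finset.range n).filter (fun i => c+2 ≤ i) ⊆ Finset.Ico (c+2) n := by
    intro i hi
    simp only [Finset.mem_filter, Finset.mem_range, Finset.mem_Ico] at *
    omega
  have := Finset.card_le_card hsub
  rw [Nat.card_Ico] at this
  exact_mod_cast this

lemma cauchy_indic {n : ℕ} (f ind : Fin n → ℝ) (hind : ∀ u, ind u = 0 ∨ ind u = 1) :
    (∑ u, ind u * f u)^2 ≤ (∑ u, ind u) * (∑ u, ind u * (f u)^2) := by
  have h := Finset.sum_mul_sq_le_sq_mul_sq Finset.univ ind (fun u => ind u * f u)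
  have e1 : ∀ u : Fin n, ind u * (ind u * f u) = ind u * f u := by
    intro u; rcases hind u with h'|h' <;> rw [h'] <;> ring
  have e2 : ∀ u : Fin n, ind u ^ 2 = ind u := by
    intro u; rcases hind u with h'|h' <;> rw [h'] <;> ring
  have e3 : ∀ u : Fin n, (ind u * f u)^2 = ind u * (f u)^2 := by
    intro u; rcases hind u with h'|h' <;> rw [h'] <;> ring
  calc (∑ u, ind u * f u)^2 = (∑ u, ind u * (ind u * f u))^2 := by
        rw [Finset.sum_congr rfl (fun u _ => e1 u)]
    _ ≤ (∑ u, ind u ^ 2) * (∑ u, (ind u * f u)^2) := h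
    _ = (∑ u, ind u) * (∑ u, ind u * (f u)^2) := by
        rw [Finset.sum_congr rfl (fun u _ => e2 u), Finset.sum_congr rfl (fun u _ => e3 u)]

lemma indic_partition (n c : ℕ) (u : Fin n) : iC n c u + iP n c u + iR n c u = 1 := by
  unfold iC iP iR
  split_ifs
  any_goals norm_num
  all_goals omega

set_option maxHeartbeats 2000000 in
lemma quadform_lt (b n : ℕ) (hb : 1 ≤ b) (hn10 : 6*b + 10 ≤ n) (x : Fin n → ℝ) (hx : x ≠ 0) :
    x ⬝ᵥ ((joinGraph n (4*b)).adjMatrix ℝ *ᵥ x) < ((n:ℝ) - 2) * (x ⬝ᵥ x) := by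
  set c := 4*b with hc
  set B : ℝ := (b : ℝ) with hBdef
  set N : ℝ := (n : ℝ) with hNdef
  set M : ℝ := N - 4*B - 2 with hMdef
  have hB : 1 ≤ B := by rw [hBdef]; exact_mod_cast hb
  have hNge : 6*B + 10 ≤ N := by
    rw [hBdef, hNdef]; exact_mod_cast hn10
  have hM : 2*B + 8 ≤ M := by rw [hMdef]; linarith
  have hB0 : (0:ℝ) < B := by linarith
  have hM0 : (0:ℝ) < M := by linarith
  set SC := ∑ u, iC n c u * x u with hSCdef
  set SP := ∑ u, iP n c u * x u with hSPdef
  set SR := ∑ u, iR n c u * x u with hSRdef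
  set qC := ∑ u, iC n c u * (x u)^2 with hqCdef
  set qP := ∑ u, iP n c u * (x u)^2 with hqPdef
  set qR := ∑ u, iR n c u * (x u)^2 with hqRdef
  have hiC01 : ∀ u : Fin n, iC n c u = 0 ∨ iC n c u = 1 := by
    intro u; unfold iC; split_ifs <;> simp
  have hiP01 : ∀ u : Fin n, iP n c u = 0 ∨ iP n c u = 1 := by
    intro u; unfold iP; split_ifs <;> simp
  have hiR01 : ∀ u : Fin n, iR n c u = 0 ∨ iR n c u = 1 := by
    intro u; unfold iR; split_ifs <;> simp
  have hqC0 : 0 ≤ qC := by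
    apply Finset.sum_nonneg; intro u _
    rcases hiC01 u with h|h <;> rw [h] <;> positivity
  have hqP0 : 0 ≤ qP := by
    apply Finset.sum_nonneg; intro u _
    rcases hiP01 u with h|h <;> rw [h] <;> positivity
  have hqR0 : 0 ≤ qR := by
    apply Finset.sum_nonneg; intro u _
    rcases hiR01 u with h|h <;> rw [h] <;> positivity
  -- partition identities
  have hs : ∑ u, x u = SC + SP + SR := by
    rw [hSCdef, hSPdef, hSRdef, ← Finset.sum_add_distrib, ← Finset.sum_add_distrib]
    apply Finset.sum_congr rfl
    intro u _
    linear_combination (x u) * (indic_partition n c u).symm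
  have hq : ∑ u, (x u)^2 = qC + qP + qR := by
    rw [hqCdef, hqPdef, hqRdef, ← Finset.sum_add_distrib, ← Finset.sum_add_distrib]
    apply Finset.sum_congr rfl
    intro u _
    linear_combination ((x u)^2) * (indic_partition n c u).symm
  have hqpos : 0 < qC + qP + qR := by
    rw [← hq]
    obtain ⟨j, hj⟩ := Function.ne_iff.1 hx
    have hj' : x j ≠ 0 := hj
    have h1 : (x j)^2 ≤ ∑ u, (x u)^2 := by
      apply Finset.single_le_sum (f := fun k => (x k)^2) (fun k _ => sq_nonneg _)
      exact Finset.mem_univ j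
    nlinarith [sq_nonneg (x j), sq_pos_of_ne_zero hj']
  -- Cauchy–Schwarz bounds
  have hcardC : ∑ u, iC n c u ≤ 4*B := by
    have h := sumC_le n c
    rw [hc] at h
    rw [hBdef]
    push_cast at h
    linarith
  have hcardP : ∑ u, iP n c u ≤ 2 := sumP_le n c
  have hcardR : ∑ u, iR n c u ≤ M := by
    have h := sumR_le n c
    have hc2n : c + 2 ≤ n := by rw [hc]; omega
    rw [Nat.cast_sub hc2n, hc] at h
    rw [hMdef, hNdef, hBdef]
    push_cast at h ⊢
    linarith
  have hsumC0 : 0 ≤ ∑ u, iC n c u := by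
    apply Finset.sum_nonneg; intro u _; rcases hiC01 u with h|h <;> rw [h] <;> norm_num
  have hsumP0 : 0 ≤ ∑ u, iP n c u := by
    apply Finset.sum_nonneg; intro u _; rcases hiP01 u with h|h <;> rw [h] <;> norm_num
  have hsumR0 : 0 ≤ ∑ u, iR n c u := by
    apply Finset.sum_nonneg; intro u _; rcases hiR01 u with h|h <;> rw [h] <;> norm_num
  have hCSC : SC^2 ≤ 4*B*qC := by
    have h := cauchy_indic x (iC n c) hiC01
    have h2 : (∑ u, iC n c u) * qC ≤ (4*B) * qC := mul_le_mul_of_nonneg_right hcardC hqC0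
    calc SC^2 ≤ (∑ u, iC n c u) * qC := h
      _ ≤ 4*B*qC := h2
  have hCSP : SP^2 ≤ 2*qP := by
    have h := cauchy_indic x (iP n c) hiP01
    have h2 : (∑ u, iP n c u) * qP ≤ 2 * qP := mul_le_mul_of_nonneg_right hcardP hqP0
    calc SP^2 ≤ (∑ u, iP n c u) * qP := h
      _ ≤ 2*qP := h2
  have hCSR : SR^2 ≤ M*qR := by
    have h := cauchy_indic x (iR n c) hiR01
    have h2 : (∑ u, iR n c u) * qR ≤ M * qR := mul_le_mul_of_nonneg_right hcardR hqR0
    calc SR^2 ≤ (∑ u, iR n c u) * qR := h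
      _ ≤ M*qR := h2
  -- rewrite the quadratic form
  have hxx : x ⬝ᵥ x = qC + qP + qR := by
    rw [← hq]
    apply Finset.sum_congr rfl
    intro u _
    ring
  rw [master n c x, ← hSPdef, ← hSRdef, hs, hq, hxx]
  have hN2 : N - 2 = 4*B + M := by rw [hMdef]; ring
  rw [hN2]
  clear_value SC SP SR qC qP qR B N M
  clear hSCdef hSPdef hSRdef hqCdef hqPdef hqRdef hs hq hxx hiC01 hiP01 hiR01
  clear hsumC0 hsumP0 hsumR0 hcardC hcardP hcardR hBdef hNdef hx x
  -- goal : (SC+SP+SR)^2 - (qC+qP+qR) - 2*(SP*SR) < (4*B+M)*(qC+qP+qR)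
  by_cases hSC : SC = 0
  · rw [hSC]
    by_cases hqPR : qP + qR = 0
    · have hqP : qP = 0 := by linarith
      have hqR : qR = 0 := by linarith
      have hSP : SP = 0 := by nlinarith [sq_nonneg SP]
      have hSR : SR = 0 := by nlinarith [sq_nonneg SR]
      rw [hSP, hSR]
      nlinarith
    · have hqPR' : 0 < qP + qR := lt_of_le_of_ne (by linarith) (Ne.symm hqPR)
      nlinarith [mul_nonneg (by linarith : (0:ℝ) ≤ 4*B+M-3) hqP0,
        mul_nonneg (by linarith : (0:ℝ) ≤ 4*B) hqR0,
        mul_pos (by linarith : (0:ℝ) < B) hqPR',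
        mul_nonneg (by linarith : (0:ℝ) ≤ M) hqP0]
  · have hkey := keypoly B M SC SP SR hB hM hSC
    have h8 : (0:ℝ) < 8*B*M := by positivity
    have hco : (0:ℝ) ≤ 4*B+M+1 := by linarith
    have e1 : 2*M*(4*B+M+1)*SC^2 ≤ 2*M*(4*B+M+1)*(4*B*qC) :=
      mul_le_mul_of_nonneg_left hCSC (by nlinarith)
    have e2 : 4*B*M*(4*B+M+1)*SP^2 ≤ 4*B*M*(4*B+M+1)*(2*qP) :=
      mul_le_mul_of_nonneg_left hCSP (by nlinarith)
    have e3 : 8*B*(4*B+M+1)*SR^2 ≤ 8*B*(4*B+M+1)*(M*qR) :=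
      mul_le_mul_of_nonneg_left hCSR (by nlinarith)
    have hXY : ((SC+SP+SR)^2 - 2*(SP*SR)) * (8*B*M) < ((4*B+M+1)*(qC+qP+qR)) * (8*B*M) := by
      nlinarith [hkey, e1, e2, e3]
    have hXY2 : (SC+SP+SR)^2 - 2*(SP*SR) < (4*B+M+1)*(qC+qP+qR) :=
      lt_of_mul_lt_mul_right hXY (by positivity)
    nlinarith [hXY2]

theorem stmt4 (a b n : ℕ) (ha : 0 < a) (hab : a ≤ b)
    (hn : (3 * b * (b + 1) : ℝ) / a + 3 * b + 7 ≤ n) :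
    specRad (joinGraph n (4 * b)) < (n : ℝ) - 2 := by
  have hb : 1 ≤ b := le_trans ha hab
  have ha' : (0:ℝ) < a := by exact_mod_cast ha
  have hab' : (a:ℝ) ≤ b := by exact_mod_cast hab
  have hdiv : 3 * ((b:ℝ) + 1) ≤ (3 * (b:ℝ) * ((b:ℝ) + 1)) / a := by
    rw [le_div_iff₀ ha']
    nlinarith [hab', mul_le_mul_of_nonneg_left hab' (by positivity : (0:ℝ) ≤ 3*((b:ℝ)+1))]
  have hn10 : 6*b + 10 ≤ n := by
    have h1 : ((6*b+10:ℕ):ℝ) ≤ (n:ℝ) := by push_cast; linarith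
    exact_mod_cast h1
  have hn0 : 0 < n := by omega
  exact rayleigh_lt hn0 _ _ (fun x hx => quadform_lt b n hb hn10 x hx)
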